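/- Let d_1,...,d_n ∈ [0,1), k ∈ {2,...,n−1}, and set x_j = 1/(1−d_j). Then the quantity Σ_{ℓ=1}^n x_ℓ · (Σ_{j=1}^{k-1} x_j Σ_{ℓ=j}^{n-1} x_ℓ) − Σ_{ℓ=1}^{k-1} x_ℓ · (Σ_{j=1}^{n-1} x_j Σ_{ℓ=j}^{n-1} x_ℓ) is strictly positive. -/

import Mathlib

open Finset

theorem key_positivity
    (n k : ℕ) (hn : 3 ≤ n) (hk2 : 2 ≤ k) (hkn : k ≤ n - 1)
    (d : ℕ → ℝ) (hd : ∀ j, 1 ≤ j → j ≤ n → 0 ≤ d j ∧ d j < 1)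
    (x : ℕ → ℝ) (hx : ∀ j, x j = (1 - d j)⁻¹) :
    0 < (∑ l ∈ Finset.Icc 1 n, x l) *
          (∑ j ∈ Finset.Icc 1 (k - 1), x j * ∑ l ∈ Finset.Icc j (n - 1), x l) -
        (∑ l ∈ Finset.Icc 1 (k - 1), x l) *
          (∑ j ∈ Finset.Icc 1 (n - 1), x j * ∑ l ∈ Finset.Icc j (n - 1), x l) := by
  have hxpos : ∀ j, 1 ≤ j → j ≤ n → 0 < x j := by
    intro j h1 h2
    have h := (hd j h1 h2).2
    rw [hx]
    exact inv_pos.mpr (by linarith)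
  set T : ℕ → ℝ := fun j => ∑ l ∈ Icc j (n-1), x l with hT
  have hTmono : ∀ i j : ℕ, 1 ≤ i → i ≤ j → T j ≤ T i := by
    intro i j h1 hij
    apply Finset.sum_le_sum_of_subset_of_nonneg (Finset.Icc_subset_Icc_left hij)
    intro l hl _
    have hl' := mem_Icc.mp hl
    exact (hxpos l (by omega) (by omega)).le
  have hTpos : ∀ j, 1 ≤ j → j ≤ n - 1 → 0 < T j := by
    intro j h1 h2
    apply Finset.sum_pos
    · intro l hl
      have hl' := mem_Icc.mp hl
      exact hxpos l (by omega) (by omega)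
    · exact Finset.nonempty_Icc.mpr h2
  set A : ℝ := ∑ j ∈ Icc 1 (k-1), x j * T j with hA
  set B : ℝ := ∑ l ∈ Icc 1 (k-1), x l with hB
  have hApos : 0 < A := by
    apply Finset.sum_pos
    · intro j hj
      have hj' := mem_Icc.mp hj
      exact mul_pos (hxpos j (by omega) (by omega)) (hTpos j (by omega) (by omega))
    · exact Finset.nonempty_Icc.mpr (by omega)
  -- split the big sums
  have icc_eq : ∀ m : ℕ, Icc 1 m = Ioc 0 m := by
    intro m; ext a; simp only [mem_Icc, mem_Ioc]; omega
  have icc_eq2 : ∀ m : ℕ, Icc k m = Ioc (k-1) m := by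
    intro m; ext a; simp only [mem_Icc, mem_Ioc]; omega
  have hsplit1 : (∑ l ∈ Icc 1 n, x l) = B + ∑ l ∈ Icc k n, x l := by
    rw [hB, icc_eq n, icc_eq (k-1), icc_eq2 n]
    exact (Finset.sum_Ioc_consecutive x (Nat.zero_le _) (show k-1 ≤ n by omega)).symm
  have hsplit2 : (∑ j ∈ Icc 1 (n-1), x j * T j) = A + ∑ j ∈ Icc k (n-1), x j * T j := by
    rw [hA, icc_eq (n-1), icc_eq (k-1), icc_eq2 (n-1)]
    exact (Finset.sum_Ioc_consecutive (fun j => x j * T j) (Nat.zero_le _)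
      (show k-1 ≤ n-1 by omega)).symm
  have hsplit3 : (∑ l ∈ Icc k n, x l) = (∑ l ∈ Icc k (n-1), x l) + x n := by
    have := Finset.sum_Icc_succ_top (f := x) (a := k) (b := n - 1) (by omega)
    rw [show n - 1 + 1 = n by omega] at this
    exact this
  have hmain : B * (∑ j ∈ Icc k (n-1), x j * T j) ≤ (∑ l ∈ Icc k (n-1), x l) * A := by
    rw [Finset.mul_sum, Finset.sum_mul]
    apply Finset.sum_le_sum
    intro i hi
    have hi' := mem_Icc.mp hi
    have hBT : B * T i ≤ A := by
      rw [hB, Finset.sum_mul]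
      apply Finset.sum_le_sum
      intro j hj
      have hj' := mem_Icc.mp hj
      exact mul_le_mul_of_nonneg_left (hTmono j i (by omega) (by omega))
        (hxpos j (by omega) (by omega)).le
    calc B * (x i * T i) = x i * (B * T i) := by ring
      _ ≤ x i * A := mul_le_mul_of_nonneg_left hBT (hxpos i (by omega) (by omega)).le
  have hxn : 0 < x n := hxpos n (by omega) le_rfl
  rw [hsplit1, hsplit2, hsplit3]
  nlinarith [mul_pos hxn hApos]
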